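/- Let n₁, n₂ ∈ ℕ and let 𝒜 : ℝ → M_{n₁+n₂}(ℂ) be a matrix-valued function, written in block form with blocks A₁₁(t) ∈ M_{n₁}(ℂ), A₁₂(t), A₂₁(t), A₂₂(t) ∈ M_{n₂}(ℂ). Suppose 𝒜 is differentiable at t₀, 𝒜(t₀) is invertible, and A₂₂(t₀) is invertible; write ℬ(t) = 𝒜(t)⁻¹ (so ℬ is differentiable at t₀) with blocks B₁₁, B₁₂, B₂₁, B₂₂. Then B₁₁(t₀) is invertible and tr(B₁₁(t₀)⁻¹ · B₁₁′(t₀)) = tr(A₂₂(t₀)⁻¹ · A₂₂′(t₀)) − tr(𝒜′(t₀) · ℬ(t₀)), where ′ denotes the derivative at t₀. -/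

import Mathlib

set_option linter.unusedSectionVars false

open Matrix

section helpers
variable {m n : Type*} [Fintype m] [Fintype n] [DecidableEq m] [DecidableEq n]

lemma tb_mul₁₁ (X Y : Matrix (m ⊕ n) (m ⊕ n) ℂ) :
    (X * Y).toBlocks₁₁ = X.toBlocks₁₁ * Y.toBlocks₁₁ + X.toBlocks₁₂ * Y.toBlocks₂₁ := by
  ext i j
  simp [Matrix.toBlocks₁₁, Matrix.toBlocks₁₂, Matrix.toBlocks₂₁, Matrix.mul_apply,
    Fintype.sum_sum_type]

lemma tb_mul₁₂ (X Y : Matrix (m ⊕ n) (m ⊕ n) ℂ) :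
    (X * Y).toBlocks₁₂ = X.toBlocks₁₁ * Y.toBlocks₁₂ + X.toBlocks₁₂ * Y.toBlocks₂₂ := by
  ext i j
  simp [Matrix.toBlocks₁₁, Matrix.toBlocks₁₂, Matrix.toBlocks₂₂, Matrix.mul_apply,
    Fintype.sum_sum_type]

lemma tb_mul₂₁ (X Y : Matrix (m ⊕ n) (m ⊕ n) ℂ) :
    (X * Y).toBlocks₂₁ = X.toBlocks₂₁ * Y.toBlocks₁₁ + X.toBlocks₂₂ * Y.toBlocks₂₁ := by
  ext i j
  simp [Matrix.toBlocks₂₁, Matrix.toBlocks₂₂, Matrix.toBlocks₁₁, Matrix.mul_apply,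
    Fintype.sum_sum_type]

lemma tb_mul₂₂ (X Y : Matrix (m ⊕ n) (m ⊕ n) ℂ) :
    (X * Y).toBlocks₂₂ = X.toBlocks₂₁ * Y.toBlocks₁₂ + X.toBlocks₂₂ * Y.toBlocks₂₂ := by
  ext i j
  simp [Matrix.toBlocks₂₁, Matrix.toBlocks₂₂, Matrix.toBlocks₁₂, Matrix.mul_apply,
    Fintype.sum_sum_type]

lemma tb_one₁₁ : (1 : Matrix (m ⊕ n) (m ⊕ n) ℂ).toBlocks₁₁ = 1 := by
  rw [← Matrix.fromBlocks_one, Matrix.toBlocks_fromBlocks₁₁]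

lemma tb_one₁₂ : (1 : Matrix (m ⊕ n) (m ⊕ n) ℂ).toBlocks₁₂ = 0 := by
  rw [← Matrix.fromBlocks_one (l := m) (m := n) (α := ℂ), Matrix.toBlocks_fromBlocks₁₂]

lemma tb_one₂₁ : (1 : Matrix (m ⊕ n) (m ⊕ n) ℂ).toBlocks₂₁ = 0 := by
  rw [← Matrix.fromBlocks_one (l := m) (m := n) (α := ℂ), Matrix.toBlocks_fromBlocks₂₁]

lemma tb_one₂₂ : (1 : Matrix (m ⊕ n) (m ⊕ n) ℂ).toBlocks₂₂ = 1 := by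
  rw [← Matrix.fromBlocks_one, Matrix.toBlocks_fromBlocks₂₂]

lemma tb_neg₁₁ (X : Matrix (m ⊕ n) (m ⊕ n) ℂ) : (-X).toBlocks₁₁ = -(X.toBlocks₁₁) := rfl

lemma trace_split (X : Matrix (m ⊕ n) (m ⊕ n) ℂ) :
    X.trace = X.toBlocks₁₁.trace + X.toBlocks₂₂.trace := by
  simp [Matrix.trace, Matrix.toBlocks₁₁, Matrix.toBlocks₂₂, Matrix.diag,
    Fintype.sum_sum_type]

end helpers

/-- Differentiated Schur complement trace identity for block matrices: if `𝒜(t)` is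
invertible and differentiable at `t₀` with invertible block `A₂₂(t₀)`, and
`ℬ(t) = 𝒜(t)⁻¹`, then `B₁₁(t₀)` is invertible and
`tr(B₁₁⁻¹ B₁₁′) = tr(A₂₂⁻¹ A₂₂′) − tr(𝒜′ ℬ)` at `t₀`. -/
theorem stmt_11
    {n₁ n₂ : ℕ}
    (𝒜 : ℝ → Matrix (Fin n₁ ⊕ Fin n₂) (Fin n₁ ⊕ Fin n₂) ℂ)
    (A' B' : Matrix (Fin n₁ ⊕ Fin n₂) (Fin n₁ ⊕ Fin n₂) ℂ)
    (t₀ : ℝ)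
    (hA' : ∀ i j, HasDerivAt (fun t => 𝒜 t i j) (A' i j) t₀)
    (hB' : ∀ i j, HasDerivAt (fun t => (𝒜 t)⁻¹ i j) (B' i j) t₀)
    (hinv : IsUnit (𝒜 t₀))
    (h22 : IsUnit ((𝒜 t₀).toBlocks₂₂)) :
    IsUnit (((𝒜 t₀)⁻¹).toBlocks₁₁) ∧
    Matrix.trace ((((𝒜 t₀)⁻¹).toBlocks₁₁)⁻¹ * B'.toBlocks₁₁) =
      Matrix.trace (((𝒜 t₀).toBlocks₂₂)⁻¹ * A'.toBlocks₂₂) -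
        Matrix.trace (A' * (𝒜 t₀)⁻¹) := by
  set M := 𝒜 t₀ with hMdef
  set B := (𝒜 t₀)⁻¹ with hBdef
  have hdet : IsUnit M.det := (Matrix.isUnit_iff_isUnit_det M).mp hinv
  have hMB : M * B = 1 := Matrix.mul_nonsing_inv M hdet
  have hBM : B * M = 1 := Matrix.nonsing_inv_mul M hdet
  -- derivative of the inverse
  have hconA : ContinuousAt (fun t => 𝒜 t) t₀ := by
    apply continuousAt_pi.2; intro i; exact continuousAt_pi.2 fun j => (hA' i j).continuousAt
  have hcont : ContinuousAt (fun t => (𝒜 t).det) t₀ :=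
    (continuous_id.matrix_det.continuousAt).comp hconA
  have hev : ∀ᶠ t in nhds t₀, (𝒜 t)⁻¹ * 𝒜 t = 1 := by
    filter_upwards [hcont.eventually_ne hdet.ne_zero] with t ht
    exact Matrix.nonsing_inv_mul _ (isUnit_iff_ne_zero.mpr ht)
  have hzero : B' * M + B * A' = 0 := by
    ext i j
    have h1 : HasDerivAt (fun t => ((𝒜 t)⁻¹ * 𝒜 t) i j) ((B' * M + B * A') i j) t₀ := by
      simp only [Matrix.mul_apply, Matrix.add_apply, ← Finset.sum_add_distrib]
      exact HasDerivAt.fun_sum fun k _ => (hB' i k).mul (hA' k j)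
    have h2 : HasDerivAt (fun t => ((𝒜 t)⁻¹ * 𝒜 t) i j) 0 t₀ := by
      refine (hasDerivAt_const t₀ ((1 : Matrix (Fin n₁ ⊕ Fin n₂) (Fin n₁ ⊕ Fin n₂) ℂ) i j)).congr_of_eventuallyEq ?_
      filter_upwards [hev] with t ht
      rw [ht]
    have := h1.unique h2
    simpa using this
  have hB'eq : B' = -(B * A' * B) := by
    have h3 : B' * M = -(B * A') := eq_neg_of_add_eq_zero_left hzero
    calc B' = B' * (M * B) := by rw [hMB, mul_one]
      _ = B' * M * B := by rw [Matrix.mul_assoc]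
      _ = -(B * A') * B := by rw [h3]
      _ = -(B * A' * B) := by rw [Matrix.neg_mul]
  -- block bookkeeping
  set b11 := B.toBlocks₁₁ with hb11d
  set b12 := B.toBlocks₁₂ with hb12d
  set b21 := B.toBlocks₂₁ with hb21d
  set b22 := B.toBlocks₂₂ with hb22d
  set m11 := M.toBlocks₁₁ with hm11d
  set m12 := M.toBlocks₁₂ with hm12d
  set m21 := M.toBlocks₂₁ with hm21d
  set m22 := M.toBlocks₂₂ with hm22d
  set P := A'.toBlocks₁₁ with hPd
  set Q := A'.toBlocks₁₂ with hQd
  set R := A'.toBlocks₂₁ with hRd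
  set T := A'.toBlocks₂₂ with hTd
  have hdet22 : IsUnit m22.det := (Matrix.isUnit_iff_isUnit_det _).mp h22
  set W := m22⁻¹ with hWd
  have hW : m22 * W = 1 := Matrix.mul_nonsing_inv _ hdet22
  have hW' : W * m22 = 1 := Matrix.nonsing_inv_mul _ hdet22
  have e1 : b11 * m11 + b12 * m21 = 1 := by
    have := congrArg Matrix.toBlocks₁₁ hBM; rwa [tb_mul₁₁, tb_one₁₁] at this
  have e2 : b11 * m12 + b12 * m22 = 0 := by
    have := congrArg Matrix.toBlocks₁₂ hBM; rwa [tb_mul₁₂, tb_one₁₂] at this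
  have f1 : m11 * b11 + m12 * b21 = 1 := by
    have := congrArg Matrix.toBlocks₁₁ hMB; rwa [tb_mul₁₁, tb_one₁₁] at this
  have f2 : m21 * b11 + m22 * b21 = 0 := by
    have := congrArg Matrix.toBlocks₂₁ hMB; rwa [tb_mul₂₁, tb_one₂₁] at this
  have f3 : m21 * b12 + m22 * b22 = 1 := by
    have := congrArg Matrix.toBlocks₂₂ hMB; rwa [tb_mul₂₂, tb_one₂₂] at this
  have hb12 : b12 = -(b11 * m12 * W) := by
    have h := eq_neg_of_add_eq_zero_left e2  -- b11 * m12 = -(b12 * m22)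
    calc b12 = b12 * (m22 * W) := by rw [hW, Matrix.mul_one]
      _ = (b12 * m22) * W := by rw [Matrix.mul_assoc]
      _ = -(b11 * m12) * W := by rw [eq_neg_of_add_eq_zero_right e2]
      _ = -(b11 * m12 * W) := by rw [Matrix.neg_mul]
  have hb21 : b21 = -(W * (m21 * b11)) := by
    calc b21 = (W * m22) * b21 := by rw [hW', Matrix.one_mul]
      _ = W * (m22 * b21) := by rw [Matrix.mul_assoc]
      _ = W * (-(m21 * b11)) := by rw [eq_neg_of_add_eq_zero_right f2]
      _ = -(W * (m21 * b11)) := by rw [Matrix.mul_neg]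
  set S := m11 - m12 * (W * m21) with hSd
  have hS1 : b11 * S = 1 := by
    rw [hb12] at e1
    rw [show b11 * S = b11 * m11 + -(b11 * m12 * W) * m21 by
      rw [hSd]; simp only [Matrix.mul_sub, Matrix.neg_mul, Matrix.mul_assoc]; abel]
    exact e1
  have hS2 : S * b11 = 1 := by
    rw [hb21] at f1
    rw [show S * b11 = m11 * b11 + m12 * -(W * (m21 * b11)) by
      rw [hSd]; simp only [Matrix.sub_mul, Matrix.mul_neg, Matrix.mul_assoc]; abel]
    exact f1
  have hUnit : IsUnit b11 := ⟨⟨b11, S, hS1, hS2⟩, rfl⟩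
  refine ⟨hUnit, ?_⟩
  have hb11inv : b11⁻¹ = S := Matrix.inv_eq_right_inv hS1
  have hb22 : b22 = W + W * (m21 * (b11 * (m12 * W))) := by
    have h4 : m22 * b22 = 1 - m21 * b12 := by
      rw [eq_sub_iff_add_eq, add_comm]; exact f3
    calc b22 = (W * m22) * b22 := by rw [hW', Matrix.one_mul]
      _ = W * (m22 * b22) := by rw [Matrix.mul_assoc]
      _ = W * (1 - m21 * b12) := by rw [h4]
      _ = W * (1 - m21 * -(b11 * m12 * W)) := by rw [hb12]
      _ = W + W * (m21 * (b11 * (m12 * W))) := by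
          simp only [Matrix.mul_sub, Matrix.mul_neg, Matrix.mul_one, sub_neg_eq_add,
            Matrix.mul_add, Matrix.mul_assoc]
  -- express B'₁₁
  have hB'11 : B'.toBlocks₁₁ = -((b11 * P + b12 * R) * b11 + (b11 * Q + b12 * T) * b21) := by
    rw [hB'eq, tb_neg₁₁, tb_mul₁₁, tb_mul₁₁, tb_mul₁₂]
  set Z : Matrix (Fin n₁) (Fin n₁) ℂ :=
    -((P - m12 * (W * R)) * b11 - (Q - m12 * (W * T)) * (W * (m21 * b11))) with hZd
  have hfact : B'.toBlocks₁₁ = b11 * Z := by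
    rw [hB'11, hb12, hb21, hZd]
    simp only [Matrix.mul_sub, Matrix.sub_mul, Matrix.mul_add, Matrix.add_mul, Matrix.mul_neg,
      Matrix.neg_mul, Matrix.mul_assoc, neg_add, neg_neg, neg_sub, sub_eq_add_neg]
    try abel
  have hLHS : Matrix.trace (b11⁻¹ * B'.toBlocks₁₁) = Matrix.trace Z := by
    rw [hb11inv, hfact, ← Matrix.mul_assoc, hS2, one_mul]
  rw [hLHS]
  -- RHS
  have hRHS : Matrix.trace (A' * B) =
      Matrix.trace (P * b11 + Q * b21) + Matrix.trace (R * b12 + T * b22) := by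
    rw [trace_split, tb_mul₁₁, tb_mul₂₂]
  rw [hRHS, hb12, hb21, hb22, hZd]
  simp only [Matrix.sub_mul, Matrix.add_mul, Matrix.mul_add, Matrix.mul_neg, Matrix.neg_mul,
    Matrix.mul_assoc, Matrix.trace_add, Matrix.trace_sub, Matrix.trace_neg]
  have c1 : Matrix.trace (m12 * (W * (R * b11))) = Matrix.trace (R * (b11 * (m12 * W))) := by
    iterate 6 (try (rw [Matrix.trace_mul_comm]; try simp only [Matrix.mul_assoc]))
  have c2 : Matrix.trace (m12 * (W * (T * (W * (m21 * b11))))) =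
      Matrix.trace (T * (W * (m21 * (b11 * (m12 * W))))) := by
    iterate 8 (try (rw [Matrix.trace_mul_comm]; try simp only [Matrix.mul_assoc]))
  have c3 : Matrix.trace (W * T) = Matrix.trace (T * W) := Matrix.trace_mul_comm _ _
  linear_combination c1 - c2 - c3
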